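/- Let e ≥ 1, n with 1 ≤ n ≤ e, and integers p, K with p coprime to e. For 1 ≤ i,j ≤ e set ν_{i,j} := ⌈(p·i-K-j)/e⌉, let j_i ∈ {1,...,e} be the least positive integer ≡ p·i-K (mod e), and let B_n := {1 ≤ i ≤ n : j_i ≤ n}. Then min over σ in the symmetric group S_n of Σ_{k=1}^n ν_{k,σ(k)} equals Σ_{k=1}^n ⌈(p·k-K)/e⌉ - #B_n, and a permutation σ ∈ S_n attains this minimum if and only if σ(i) ≥ j_i for every i ∈ B_n. -/

import Mathlib

lemma ceil_shift (e : ℕ) (he : 0 < e) (m r : ℤ) :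
    ⌈((e * m + r : ℤ) : ℚ) / (e : ℚ)⌉ = m + ⌈((r : ℤ) : ℚ) / (e : ℚ)⌉ := by
  have h0 : (e : ℚ) ≠ 0 := by positivity
  have : ((e * m + r : ℤ) : ℚ) / (e : ℚ) = (r : ℚ) / e + (m : ℚ) := by
    push_cast; field_simp; ring
  rw [this, Int.ceil_add_intCast, add_comm]

lemma ceil_one (e : ℕ) (he : 0 < e) (r : ℤ) (h1 : 0 < r) (h2 : r ≤ e) :
    ⌈((r : ℤ) : ℚ) / (e : ℚ)⌉ = 1 := by
  rw [Int.ceil_eq_iff]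
  refine ⟨by norm_num; exact div_pos (by exact_mod_cast h1) (by positivity), ?_⟩
  push_cast
  rw [div_le_one (by positivity)]
  exact_mod_cast h2

lemma ceil_zero (e : ℕ) (he : 0 < e) (r : ℤ) (h1 : -e < r) (h2 : r ≤ 0) :
    ⌈((r : ℤ) : ℚ) / (e : ℚ)⌉ = 0 := by
  rw [Int.ceil_eq_iff]
  constructor
  · norm_num
    rw [lt_div_iff₀ (by positivity : (0:ℚ) < (e:ℚ))]
    rw [show (-1 : ℚ) * (e:ℚ) = ((-e : ℤ) : ℚ) by push_cast; ring]
    exact_mod_cast h1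
  · push_cast
    exact div_nonpos_of_nonpos_of_nonneg (by exact_mod_cast h2) (by positivity)

lemma nu_eq (e : ℕ) (he : 0 < e) (c : ℤ) (ji jj : ℕ)
    (h1 : 1 ≤ ji) (h2 : ji ≤ e) (h3 : 1 ≤ jj) (h4 : jj ≤ e)
    (hcong : (ji : ℤ) ≡ c [ZMOD e]) :
    ⌈((c - jj : ℤ) : ℚ) / (e : ℚ)⌉
      = ⌈((c : ℤ) : ℚ) / (e : ℚ)⌉ - (if ji ≤ jj then 1 else 0) := by
  obtain ⟨m, hm⟩ := hcong.dvd
  have hc : c = e * m + ji := by linarith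
  have h5 : c - jj = e * m + ((ji : ℤ) - jj) := by rw [hc]; ring
  rw [h5, ceil_shift e he, hc, ceil_shift e he,
    ceil_one e he ji (by exact_mod_cast h1) (by exact_mod_cast h2)]
  split_ifs with h
  · rw [ceil_zero e he _ (by omega) (by omega)]; ring
  · rw [ceil_one e he _ (by omega) (by omega)]; ring

theorem stmt11 (e n : ℕ) (p K : ℤ) (he : 1 ≤ e) (hn1 : 1 ≤ n) (hn2 : n ≤ e)
    (hp : IsCoprime p (e : ℤ)) (j : ℕ → ℕ)
    (hj : ∀ i, 1 ≤ j i ∧ j i ≤ e ∧ (j i : ℤ) ≡ p * i - K [ZMOD e]) :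
    IsLeast
      {y : ℤ | ∃ σ : Equiv.Perm (Fin n),
        (∑ k : Fin n,
          ⌈((p * ((k : ℕ) + 1) - K - (((σ k : Fin n) : ℕ) + 1) : ℤ) : ℚ) / (e : ℚ)⌉) = y}
      ((∑ k ∈ Finset.Icc 1 n, ⌈((p * (k : ℤ) - K : ℤ) : ℚ) / (e : ℚ)⌉) -
        ((Finset.Icc 1 n).filter (fun i => j i ≤ n)).card) ∧
    ∀ σ : Equiv.Perm (Fin n),
      (∑ k : Fin n,
          ⌈((p * ((k : ℕ) + 1) - K - (((σ k : Fin n) : ℕ) + 1) : ℤ) : ℚ) / (e : ℚ)⌉) =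
        ((∑ k ∈ Finset.Icc 1 n, ⌈((p * (k : ℤ) - K : ℤ) : ℚ) / (e : ℚ)⌉) -
          ((Finset.Icc 1 n).filter (fun i => j i ≤ n)).card) ↔
      ∀ i : Fin n, j ((i : ℕ) + 1) ≤ n → j ((i : ℕ) + 1) ≤ ((σ i : Fin n) : ℕ) + 1 := by
  classical
  have he' : 0 < e := he
  set A : ℤ := ∑ k ∈ Finset.Icc 1 n, ⌈((p * (k : ℤ) - K : ℤ) : ℚ) / (e : ℚ)⌉ with hA
  set cB : Finset (Fin n) := Finset.univ.filter (fun i : Fin n => j ((i : ℕ) + 1) ≤ n)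
    with hcB
  set Qf : Equiv.Perm (Fin n) → Finset (Fin n) :=
    fun σ => Finset.univ.filter (fun k : Fin n => j ((k : ℕ) + 1) ≤ ((σ k : Fin n) : ℕ) + 1)
    with hQf
  -- master formula for the sum
  have master : ∀ σ : Equiv.Perm (Fin n),
      (∑ k : Fin n,
        ⌈((p * ((k : ℕ) + 1) - K - (((σ k : Fin n) : ℕ) + 1) : ℤ) : ℚ) / (e : ℚ)⌉)
      = A - ((Qf σ).card : ℤ) := by
    intro σ
    have step : ∀ k : Fin n,
        ⌈((p * ((k : ℕ) + 1) - K - (((σ k : Fin n) : ℕ) + 1) : ℤ) : ℚ) / (e : ℚ)⌉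
        = ⌈((p * ((k : ℕ) + 1 : ℕ) - K : ℤ) : ℚ) / (e : ℚ)⌉
          - (if j ((k : ℕ) + 1) ≤ ((σ k : Fin n) : ℕ) + 1 then (1 : ℤ) else 0) := by
      intro k
      have hjk := hj ((k : ℕ) + 1)
      have h4 : ((σ k : Fin n) : ℕ) + 1 ≤ e := by
        have := (σ k).isLt; omega
      have := nu_eq e he' (p * (((k : ℕ) + 1 : ℕ) : ℤ) - K)
        (j ((k : ℕ) + 1)) (((σ k : Fin n) : ℕ) + 1)
        hjk.1 hjk.2.1 (by omega) h4 hjk.2.2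
      rw [← this]
      push_cast
      ring_nf
    rw [Finset.sum_congr rfl (fun k _ => step k), Finset.sum_sub_distrib]
    congr 1
    · rw [hA, show Finset.Icc 1 n = Finset.Ico 1 (n+1) from (Finset.Ico_add_one_right_eq_Icc 1 n).symm,
        Finset.sum_Ico_eq_sum_range]
      rw [Fin.sum_univ_eq_sum_range
        (fun k => ⌈((p * ((k : ℕ) + 1 : ℕ) - K : ℤ) : ℚ) / (e : ℚ)⌉)]
      simp only [Nat.add_sub_cancel]
      apply Finset.sum_congr rfl
      intro i _
      congr 3
      push_cast
      ring
    · rw [Finset.sum_boole]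
  -- Qf σ ⊆ cB
  have hsub : ∀ σ : Equiv.Perm (Fin n), Qf σ ⊆ cB := by
    intro σ k hk
    simp only [hQf, hcB, Finset.mem_filter, Finset.mem_univ, true_and] at *
    have := (σ k).isLt
    omega
  have hle : ∀ σ : Equiv.Perm (Fin n), (Qf σ).card ≤ cB.card :=
    fun σ => Finset.card_le_card (hsub σ)
  -- card equality characterization
  have hiff : ∀ σ : Equiv.Perm (Fin n),
      (Qf σ).card = cB.card ↔
        ∀ i : Fin n, j ((i : ℕ) + 1) ≤ n → j ((i : ℕ) + 1) ≤ ((σ i : Fin n) : ℕ) + 1 := by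
    intro σ
    constructor
    · intro h i hi
      have heqq : Qf σ = cB := Finset.eq_of_subset_of_card_le (hsub σ) (le_of_eq h.symm)
      have : i ∈ Qf σ := by
        rw [heqq]; simp only [hcB, Finset.mem_filter, Finset.mem_univ, true_and]; exact hi
      simpa only [hQf, Finset.mem_filter, Finset.mem_univ, true_and] using this
    · intro h
      have heqq : Qf σ = cB := by
        apply Finset.Subset.antisymm (hsub σ)
        intro i hi
        simp only [hcB, Finset.mem_filter, Finset.mem_univ, true_and] at hi
        simp only [hQf, Finset.mem_filter, Finset.mem_univ, true_and]
        exact h i hi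
      rw [heqq]
  -- card of cB equals the Icc filter card
  have hcard : ((Finset.Icc 1 n).filter (fun i => j i ≤ n)).card = cB.card := by
    symm
    apply Finset.card_bij (fun (i : Fin n) _ => (i : ℕ) + 1)
    · intro a ha
      simp only [hcB, Finset.mem_filter, Finset.mem_univ, true_and] at ha
      simp only [Finset.mem_filter, Finset.mem_Icc]
      have := a.isLt
      exact ⟨⟨by omega, by omega⟩, ha⟩
    · intro a _ b _ hab
      exact Fin.ext (by omega)
    · intro b hb
      simp only [Finset.mem_filter, Finset.mem_Icc] at hb
      refine ⟨⟨b - 1, by omega⟩, ?_, by simp; omega⟩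
      simp only [hcB, Finset.mem_filter, Finset.mem_univ, true_and]
      have : b - 1 + 1 = b := by omega
      rw [this]
      exact hb.2
  -- injectivity of i ↦ j (i+1)
  have hjinj : ∀ a b : Fin n, j ((a : ℕ) + 1) = j ((b : ℕ) + 1) → a = b := by
    intro a b hab
    have h1 := (hj ((a : ℕ) + 1)).2.2
    have h2 := (hj ((b : ℕ) + 1)).2.2
    rw [hab] at h1
    have h3 : (p * (((a : ℕ) + 1 : ℕ) : ℤ) - K) ≡ (p * (((b : ℕ) + 1 : ℕ) : ℤ) - K)
        [ZMOD e] := h1.symm.trans h2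
    have h4 : (e : ℤ) ∣ p * (((b : ℕ) : ℤ) - ((a : ℕ) : ℤ)) := by
      have := h3.dvd
      have heq : (p * (((b : ℕ) + 1 : ℕ) : ℤ) - K) - (p * (((a : ℕ) + 1 : ℕ) : ℤ) - K)
          = p * (((b : ℕ) : ℤ) - ((a : ℕ) : ℤ)) := by push_cast; ring
      rwa [heq] at this
    have h5 : (e : ℤ) ∣ (((b : ℕ) : ℤ) - ((a : ℕ) : ℤ)) :=
      (hp.symm).dvd_of_dvd_mul_left h4
    have h6 : (((b : ℕ) : ℤ) - ((a : ℕ) : ℤ)) = 0 := by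
      apply Int.eq_zero_of_abs_lt_dvd h5
      have ha := a.isLt
      have hb := b.isLt
      rw [abs_lt]
      constructor <;> [skip; skip] <;> push_cast <;> omega
    exact Fin.ext (by omega)
  -- construction of the optimal permutation
  have hexists : ∃ σ : Equiv.Perm (Fin n),
      ∀ i : Fin n, j ((i : ℕ) + 1) ≤ n → j ((i : ℕ) + 1) ≤ ((σ i : Fin n) : ℕ) + 1 := by
    set pr : Fin n → Prop := fun i => j ((i : ℕ) + 1) ≤ n with hpr
    set f : {i : Fin n // pr i} → Fin n :=
      fun i => ⟨j ((i.1 : ℕ) + 1) - 1, by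
        have h1 := (hj ((i.1 : ℕ) + 1)).1
        have h2 := i.2
        simp only [hpr] at h2
        omega⟩ with hf
    have hfinj : Function.Injective f := by
      intro a b hab
      simp only [hf, Fin.mk.injEq] at hab
      have h1 := (hj ((a.1 : ℕ) + 1)).1
      have h2 := (hj ((b.1 : ℕ) + 1)).1
      apply Subtype.ext
      exact hjinj a.1 b.1 (by omega)
    let eq1 : {i : Fin n // pr i} ≃ {x : Fin n // x ∈ Set.range f} :=
      Equiv.ofInjective f hfinj
    refine ⟨eq1.extendSubtype, fun i hi => ?_⟩
    have hpi : pr i := hi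
    rw [Equiv.extendSubtype_apply_of_mem eq1 i hpi]
    have : (eq1 ⟨i, hpi⟩ : Fin n) = f ⟨i, hpi⟩ := rfl
    rw [this]
    simp only [hf]
    have h1 := (hj ((i : ℕ) + 1)).1
    omega
  obtain ⟨σ₀, hσ₀⟩ := hexists
  constructor
  · constructor
    · refine ⟨σ₀, ?_⟩
      rw [master σ₀]
      have h0 : (Qf σ₀).card = cB.card := (hiff σ₀).mpr hσ₀
      rw [h0, ← hcard]
    · rintro y ⟨σ, rfl⟩
      rw [master σ, hcard]
      have h1 := hle σ
      omega
  · intro σ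
    rw [master σ, hcard]
    constructor
    · intro h
      apply (hiff σ).mp
      omega
    · intro h
      rw [(hiff σ).mpr h]
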